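/- For every m ≥ 3, the number of admissible pinnacle sets whose maximum element equals m is binomial(m-2, ⌊m/2⌋). -/

import Mathlib

/-- `i` is a peak of the permutation `w` of `{1,…,n}` (represented on `Fin n`):
`0 < i < n-1` (0-indexed) and `w(i-1) < w(i) > w(i+1)`. -/
def IsPeak {n : ℕ} (w : Equiv.Perm (Fin n)) (i : Fin n) : Prop :=
  0 < i.val ∧ ∃ h : i.val + 1 < n,
    w ⟨i.val - 1, Nat.lt_of_le_of_lt (Nat.sub_le _ _) i.isLt⟩ < w i ∧
    w ⟨i.val + 1, h⟩ < w i

/-- The pinnacle set of `w`, as a set of values in `{1,…,n}`. -/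
def Pin {n : ℕ} (w : Equiv.Perm (Fin n)) : Set ℕ :=
  {v | ∃ i : Fin n, IsPeak w i ∧ v = (w i).val + 1}

/-- `p_S(n)`: the number of permutations in `S_n` with pinnacle set `S`. -/
noncomputable def pcount (n : ℕ) (S : Set ℕ) : ℕ :=
  Nat.card {w : Equiv.Perm (Fin n) // Pin w = S}

/-- `S` is an admissible pinnacle set. -/
def Admissible (S : Finset ℕ) : Prop :=
  ∃ (n : ℕ) (w : Equiv.Perm (Fin n)), Pin w = ↑S

open Finset

lemma pin_cond {n : ℕ} (w : Equiv.Perm (Fin n)) (S : Finset ℕ) (hw : Pin w = ↑S) :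
    ∀ s ∈ S, 2 * (S.filter (· ≤ s)).card < s := by
  classical
  intro s hs
  set P : Finset (Fin n) := univ.filter (fun p => IsPeak w p ∧ (w p).val + 1 ≤ s) with hP
  have hsPin : s ∈ Pin w := by rw [hw]; exact_mod_cast hs
  obtain ⟨p0, hp0, hp0v⟩ := hsPin
  have hp0P : p0 ∈ P := by
    simp only [hP, mem_filter, mem_univ, true_and]
    exact ⟨hp0, by omega⟩
  have hPne : P.Nonempty := ⟨p0, hp0P⟩
  have hpeak : ∀ p ∈ P, IsPeak w p := by
    intro p hp; simp only [hP, mem_filter] at hp; exact hp.2.1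
  have hvle : ∀ p ∈ P, (w p).val + 1 ≤ s := by
    intro p hp; simp only [hP, mem_filter] at hp; exact hp.2.2
  -- step 1
  have h1 : (S.filter (· ≤ s)).card ≤ P.card := by
    apply Finset.card_le_card_of_surjOn (fun p => (w p).val + 1)
    intro t ht
    simp only [coe_filter, Set.mem_setOf_eq] at ht
    have : t ∈ Pin w := by rw [hw]; exact_mod_cast ht.1
    obtain ⟨p, hp, rfl⟩ := this
    refine ⟨p, ?_, rfl⟩
    simp only [Finset.mem_coe, hP, mem_filter, mem_univ, true_and]
    exact ⟨hp, ht.2⟩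
  -- successor map
  set np : Fin n → Fin n := fun p => if h : (p : ℕ) + 1 < n then (⟨p.val + 1, h⟩ : Fin n) else p
    with hnp
  have hnp_eq : ∀ p ∈ P, (np p).val = p.val + 1 := by
    intro p hp
    obtain ⟨_, h2, _, _⟩ := hpeak p hp
    simp [hnp, dif_pos h2]
  have hnp_lt : ∀ p ∈ P, w (np p) < w p := by
    intro p hp
    obtain ⟨h1', h2, hl, hr⟩ := hpeak p hp
    have : np p = ⟨p.val + 1, h2⟩ := Fin.ext (hnp_eq p hp)
    rw [this]; exact hr
  set pmin := P.min' hPne with hpmin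
  have hpminP : pmin ∈ P := P.min'_mem hPne
  have hpminpos : 0 < pmin.val := (hpeak _ hpminP).1
  set xm : Fin n := ⟨pmin.val - 1, Nat.lt_of_le_of_lt (Nat.sub_le _ _) pmin.isLt⟩ with hxm
  have hxm_lt : w xm < w pmin := (hpeak _ hpminP).2.2.1
  set X : Finset (Fin n) := (P ∪ P.image np) ∪ {xm} with hX
  have hdisj : Disjoint P (P.image np) := by
    rw [Finset.disjoint_left]
    intro x hxP hxI
    obtain ⟨p, hp, rfl⟩ := Finset.mem_image.mp hxI
    obtain ⟨h1', h2, hl, hr⟩ := hpeak _ hxP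
    have hv : (np p).val - 1 = p.val := by have := hnp_eq p hp; omega
    have hEq : (⟨(np p).val - 1, Nat.lt_of_le_of_lt (Nat.sub_le _ _) (np p).isLt⟩ : Fin n) = p :=
      Fin.ext hv
    rw [hEq] at hl
    exact absurd (hnp_lt p hp) (not_lt.mpr hl.le)
  have hxm_notin : xm ∉ P ∪ P.image np := by
    intro hmem
    rcases Finset.mem_union.mp hmem with h | h
    · have h' : pmin ≤ xm := P.min'_le _ h
      have : pmin.val ≤ pmin.val - 1 := h'
      omega
    · obtain ⟨p, hp, hpe⟩ := Finset.mem_image.mp h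
      have h1 := hnp_eq p hp
      have h2 : (np p).val = pmin.val - 1 := by rw [hpe]
      have h3 : pmin ≤ p := P.min'_le _ hp
      have : pmin.val ≤ p.val := h3
      omega
  have hinjnp : Set.InjOn np ↑P := by
    intro a ha b hb hab
    have h1 := hnp_eq a (by exact_mod_cast ha)
    have h2 := hnp_eq b (by exact_mod_cast hb)
    have := congrArg Fin.val hab
    apply Fin.ext; omega
  have hXcard : X.card = 2 * P.card + 1 := by
    rw [hX, Finset.card_union_of_disjoint (by simpa using hxm_notin),
      Finset.card_union_of_disjoint hdisj, Finset.card_image_of_injOn hinjnp,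
      Finset.card_singleton]
    ring
  have hval : ∀ x ∈ X, (w x).val < s := by
    intro x hx
    simp only [hX, Finset.mem_union, Finset.mem_singleton] at hx
    rcases hx with (h | h) | h
    · have := hvle x h; omega
    · obtain ⟨p, hp, rfl⟩ := Finset.mem_image.mp h
      have h1 := hnp_lt p hp
      have h2 := hvle p hp
      have : (w (np p)).val < (w p).val := h1
      omega
    · subst h
      have := hvle pmin hpminP
      have : (w xm).val < (w pmin).val := hxm_lt
      omega
  have himg : (X.image (fun x => (w x).val)) ⊆ Finset.range s := by
    intro v hv
    obtain ⟨x, hx, rfl⟩ := Finset.mem_image.mp hv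
    exact Finset.mem_range.mpr (hval x hx)
  have hinj : Set.InjOn (fun x => (w x).val) ↑X := by
    intro a _ b _ hab
    exact w.injective (Fin.ext hab)
  have : X.card ≤ s := by
    calc X.card = (X.image (fun x => (w x).val)).card := (Finset.card_image_of_injOn hinj).symm
    _ ≤ (Finset.range s).card := Finset.card_le_card himg
    _ = s := Finset.card_range s
  omega


open Finset

lemma exists_perm_pin {n d : ℕ} (hd : 2 * d < n) (hd1 : 0 < d)
    (e : Fin d ↪o Fin n) (f : Fin (n - d) ↪o Fin n)
    (hfne : ∀ (i : Fin d) (k : Fin (n - d)), e i ≠ f k)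
    (hK1 : ∀ (j : Fin d) (k : Fin (n - d)), k.val ≤ j.val + 1 → f k < e j)
    (hK2' : ∀ k : Fin (n - d), f k < e ⟨d - 1, by omega⟩) :
    ∃ w : Equiv.Perm (Fin n), Pin w = {v | ∃ j : Fin d, v = (e j).val + 1} := by
  classical
  obtain ⟨F, hFodd, hFeven, hFtail⟩ :
      ∃ F : Fin n → Fin n,
        (∀ (k : Fin n) (h1 : k.val < 2 * d) (h2 : k.val % 2 = 1),
          F k = e ⟨k.val / 2, by omega⟩) ∧
        (∀ (k : Fin n) (h1 : k.val < 2 * d) (h2 : k.val % 2 = 0),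
          F k = f ⟨k.val / 2, by omega⟩) ∧
        (∀ (k : Fin n) (h1 : ¬ (k.val < 2 * d)),
          F k = f ⟨n + d - 1 - k.val, by have := k.isLt; omega⟩) := by
    refine ⟨fun k =>
      if h1 : k.val < 2 * d then
        (if k.val % 2 = 1 then e ⟨k.val / 2, by omega⟩ else f ⟨k.val / 2, by omega⟩)
      else f ⟨n + d - 1 - k.val, by have := k.isLt; omega⟩, ?_, ?_, ?_⟩
    · intro k h1 h2
      simp only [h1, h2, dif_pos, if_pos]
    · intro k h1 h2
      simp only [h1, dif_pos]
      rw [if_neg (by omega)]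
    · intro k h1
      simp only [dif_neg h1]
  have hFinj : Function.Injective F := by
    intro a b hab
    have ha := a.isLt
    have hb := b.isLt
    rcases Nat.lt_or_ge a.val (2 * d) with h1a | h1a <;>
      rcases Nat.lt_or_ge b.val (2 * d) with h1b | h1b
    · rcases Nat.mod_two_eq_zero_or_one a.val with h2a | h2a <;>
        rcases Nat.mod_two_eq_zero_or_one b.val with h2b | h2b
      · rw [hFeven a h1a h2a, hFeven b h1b h2b] at hab
        have := congrArg Fin.val (f.injective hab)
        simp only at this
        apply Fin.ext; omega
      · rw [hFeven a h1a h2a, hFodd b h1b h2b] at hab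
        exact absurd hab.symm (hfne _ _)
      · rw [hFodd a h1a h2a, hFeven b h1b h2b] at hab
        exact absurd hab (hfne _ _)
      · rw [hFodd a h1a h2a, hFodd b h1b h2b] at hab
        have := congrArg Fin.val (e.injective hab)
        simp only at this
        apply Fin.ext; omega
    · rcases Nat.mod_two_eq_zero_or_one a.val with h2a | h2a
      · rw [hFeven a h1a h2a, hFtail b (by omega)] at hab
        have := congrArg Fin.val (f.injective hab)
        simp only at this
        omega
      · rw [hFodd a h1a h2a, hFtail b (by omega)] at hab
        exact absurd hab (hfne _ _)
    · rcases Nat.mod_two_eq_zero_or_one b.val with h2b | h2b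
      · rw [hFtail a (by omega), hFeven b h1b h2b] at hab
        have := congrArg Fin.val (f.injective hab)
        simp only at this
        omega
      · rw [hFtail a (by omega), hFodd b h1b h2b] at hab
        exact absurd hab.symm (hfne _ _)
    · rw [hFtail a (by omega), hFtail b (by omega)] at hab
      have := congrArg Fin.val (f.injective hab)
      simp only at this
      apply Fin.ext; omega
  obtain ⟨w, hwF⟩ : ∃ w : Equiv.Perm (Fin n), ∀ k, w k = F k :=
    ⟨Equiv.ofBijective F (Finite.injective_iff_bijective.mp hFinj), fun k => rfl⟩
  clear hFinj
  refine ⟨w, ?_⟩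
  -- peak characterization
  have hchar : ∀ i : Fin n, IsPeak w i ↔ (i.val % 2 = 1 ∧ i.val < 2 * d) := by
    intro i
    constructor
    · rintro ⟨hpos, h2, hl, hr⟩
      rcases Nat.lt_or_ge i.val (2 * d) with h1 | h1
      · rcases Nat.mod_two_eq_zero_or_one i.val with hpar | hpar
        · -- even, < 2d : contradiction via right neighbor
          exfalso
          have hi1 : i.val + 1 < 2 * d := by omega
          have hrn : w ⟨i.val + 1, h2⟩ = e ⟨(i.val + 1) / 2, by omega⟩ :=
            (hwF _).trans (hFodd ⟨i.val + 1, h2⟩ hi1 (by simp; omega))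
          have hself : w i = f ⟨i.val / 2, by omega⟩ :=
            (hwF _).trans (hFeven i h1 hpar)
          rw [hrn, hself] at hr
          have hidx : (⟨(i.val + 1) / 2, by omega⟩ : Fin d) = ⟨i.val / 2, by omega⟩ :=
            Fin.ext (by simp; omega)
          rw [hidx] at hr
          exact absurd (hK1 ⟨i.val / 2, by omega⟩ ⟨i.val / 2, by omega⟩ (by simp)) (not_lt.mpr hr.le)
        · exact ⟨hpar, h1⟩
      · exfalso
        rcases Nat.eq_or_lt_of_le h1 with heq | hgt
        · -- i.val = 2d : left neighbor is the top pinnacle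
          have hlidx : i.val - 1 < 2 * d := by omega
          have hln : w ⟨i.val - 1, Nat.lt_of_le_of_lt (Nat.sub_le _ _) i.isLt⟩
              = e ⟨(i.val - 1) / 2, by omega⟩ :=
            (hwF _).trans (hFodd _ hlidx (by simp; omega))
          have hself : w i = f ⟨n + d - 1 - i.val, by have := i.isLt; omega⟩ :=
            (hwF _).trans (hFtail i (by omega))
          rw [hln, hself] at hl
          have hidx : (⟨(i.val - 1) / 2, by omega⟩ : Fin d) = ⟨d - 1, by omega⟩ :=
            Fin.ext (by simp; omega)
          rw [hidx] at hl
          exact absurd (hK2' _) (not_lt.mpr hl.le)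
        · -- i.val > 2d : left neighbor is a bigger tail element
          have hln := (hwF (⟨i.val - 1, Nat.lt_of_le_of_lt (Nat.sub_le _ _) i.isLt⟩ : Fin n)).trans
            (hFtail (⟨i.val - 1, Nat.lt_of_le_of_lt (Nat.sub_le _ _) i.isLt⟩ : Fin n)
              (by simp; omega))
          have hself := (hwF i).trans (hFtail i (by omega))
          rw [hln, hself] at hl
          have hlt := (f.lt_iff_lt).mp hl
          rw [Fin.lt_def] at hlt
          simp only [Fin.val_mk] at hlt
          omega
    · rintro ⟨hpar, h1⟩
      have hpos : 0 < i.val := by omega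
      have h2 : i.val + 1 < n := by omega
      refine ⟨hpos, h2, ?_, ?_⟩
      · have hln : w ⟨i.val - 1, Nat.lt_of_le_of_lt (Nat.sub_le _ _) i.isLt⟩
            = f ⟨(i.val - 1) / 2, by omega⟩ :=
          (hwF _).trans (hFeven _ (by simp; omega) (by simp; omega))
        have hself : w i = e ⟨i.val / 2, by omega⟩ :=
          (hwF _).trans (hFodd i h1 hpar)
        rw [hln, hself]
        apply hK1
        simp only
        omega
      · have hself : w i = e ⟨i.val / 2, by omega⟩ :=
          (hwF _).trans (hFodd i h1 hpar)
        rcases Nat.lt_or_ge (i.val + 1) (2 * d) with h3 | h3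
        · have hrn : w ⟨i.val + 1, h2⟩ = f ⟨(i.val + 1) / 2, by omega⟩ :=
            (hwF _).trans (hFeven _ h3 (by simp; omega))
          rw [hrn, hself]
          apply hK1
          simp only
          omega
        · have hrn : w ⟨i.val + 1, h2⟩ = f ⟨n + d - 1 - (i.val + 1), by omega⟩ :=
            (hwF _).trans (hFtail _ (by simp; omega))
          rw [hrn, hself]
          have hidx : (⟨i.val / 2, by omega⟩ : Fin d) = ⟨d - 1, by omega⟩ :=
            Fin.ext (by simp; omega)
          rw [hidx]
          exact hK2' _
  -- compute the pinnacle set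
  ext v
  simp only [Pin, Set.mem_setOf_eq]
  constructor
  · rintro ⟨i, hp, rfl⟩
    obtain ⟨hpar, h1⟩ := (hchar i).mp hp
    have hself : w i = e ⟨i.val / 2, by omega⟩ :=
      (hwF _).trans (hFodd i h1 hpar)
    exact ⟨⟨i.val / 2, by omega⟩, by rw [hself]⟩
  · rintro ⟨j, rfl⟩
    have hj := j.isLt
    refine ⟨⟨2 * j.val + 1, by omega⟩, (hchar _).mpr ⟨by simp, by simp; omega⟩, ?_⟩
    have hself : w ⟨2 * j.val + 1, by omega⟩ = e ⟨(2 * j.val + 1) / 2, by omega⟩ :=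
      (hwF _).trans (hFodd _ (by simp; omega) (by simp))
    rw [hself]
    have hidx : (⟨(2 * j.val + 1) / 2, by omega⟩ : Fin d) = j := Fin.ext (by simp; omega)
    rw [hidx]

lemma card_lt_fin {N : ℕ} (y : Fin N) :
    ((univ : Finset (Fin N)).filter (fun x => x < y)).card = y.val := by
  classical
  have himg : ((univ : Finset (Fin N)).filter (fun x => x < y)).image Fin.val
      = Finset.range y.val := by
    ext v
    simp only [mem_image, mem_filter, mem_univ, true_and, mem_range]
    constructor
    · rintro ⟨x, hx, rfl⟩; exact hx
    · intro hv
      exact ⟨⟨v, hv.trans y.isLt⟩, hv, rfl⟩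
  calc ((univ : Finset (Fin N)).filter (fun x => x < y)).card
      = (((univ : Finset (Fin N)).filter (fun x => x < y)).image Fin.val).card :=
        (Finset.card_image_of_injective _ Fin.val_injective).symm
    _ = y.val := by rw [himg, Finset.card_range]

lemma card_filter_lt_orderEmb {n c : ℕ} (B : Finset (Fin n)) (hB : B.card = c) (y : Fin c) :
    (B.filter (fun x => x < B.orderEmbOfFin hB y)).card ≤ y.val := by
  classical
  set g := B.orderEmbOfFin hB with hg
  have : (B.filter (fun x => x < g y)).card ≤ ((univ : Finset (Fin c)).filter (fun i => i < y)).card := by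
    apply Finset.card_le_card_of_surjOn g
    intro x hx
    simp only [coe_filter, Set.mem_setOf_eq, Finset.mem_coe] at hx ⊢
    have hxB : x ∈ B := hx.1
    have : x ∈ Set.range g := by rw [hg, Finset.range_orderEmbOfFin]; exact_mod_cast hxB
    obtain ⟨i, rfl⟩ := this
    refine ⟨i, ?_, rfl⟩
    simp only [Set.mem_setOf_eq, mem_coe, mem_filter, mem_univ, true_and]
    exact (OrderEmbedding.lt_iff_lt _).mp hx.2
  rwa [card_lt_fin] at this

lemma cond_admissible (S : Finset ℕ)
    (hc : ∀ s ∈ S, 2 * (S.filter (· ≤ s)).card < s) :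
    ∃ (n : ℕ) (w : Equiv.Perm (Fin n)), Pin w = ↑S := by
  classical
  rcases S.eq_empty_or_nonempty with rfl | hne
  · refine ⟨0, 1, ?_⟩
    ext v
    simp only [Pin, Set.mem_setOf_eq, coe_empty, Set.mem_empty_iff_false, iff_false]
    rintro ⟨i, _, _⟩
    exact absurd i.isLt (by omega)
  set n := S.max' hne with hn
  set d := S.card with hdd
  have hnS : n ∈ S := S.max'_mem hne
  have hle : ∀ x ∈ S, x ≤ n := fun x hx => S.le_max' x hx
  have hpos : ∀ s ∈ S, 3 ≤ s := by
    intro s hsS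
    have h1 : 1 ≤ (S.filter (· ≤ s)).card := by
      rw [Nat.one_le_iff_ne_zero, ← Nat.pos_iff_ne_zero, Finset.card_pos]
      exact ⟨s, Finset.mem_filter.mpr ⟨hsS, le_refl s⟩⟩
    have := hc s hsS
    omega
  have hd : 2 * d < n := by
    have := hc n hnS
    rwa [Finset.filter_true_of_mem hle, ← hdd] at this
  have hd1 : 0 < d := Finset.card_pos.mpr hne
  -- the pinnacle values, shifted down by one, inside Fin n
  set S' : Finset (Fin n) := univ.filter (fun x => x.val + 1 ∈ S) with hS'
  have hS'card : S'.card = d := by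
    rw [hdd]
    apply Finset.card_bij (fun (x : Fin n) _ => x.val + 1)
    · intro x hx
      simp only [hS', mem_filter] at hx
      exact hx.2
    · intro a ha b hb hab
      exact Fin.ext (by omega)
    · intro s hsS
      have h3 := hpos s hsS
      have hsn := hle s hsS
      refine ⟨⟨s - 1, by omega⟩, ?_, ?_⟩
      · simp only [hS', mem_filter, mem_univ, true_and]
        show s - 1 + 1 ∈ S
        rwa [Nat.sub_add_cancel (by omega)]
      · show s - 1 + 1 = s
        omega
  set A' : Finset (Fin n) := S'ᶜ with hA'
  have hA'card : A'.card = n - d := by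
    rw [hA', Finset.card_compl, hS'card, Fintype.card_fin]
  set e := S'.orderEmbOfFin hS'card with he
  set f := A'.orderEmbOfFin hA'card with hf
  have heS : ∀ j, e j ∈ S' := fun j => Finset.orderEmbOfFin_mem S' hS'card j
  have hfA : ∀ k, f k ∈ A' := fun k => Finset.orderEmbOfFin_mem A' hA'card k
  have hfnS : ∀ k, f k ∉ S' := by
    intro k
    have := hfA k
    rw [hA', Finset.mem_compl] at this
    exact this
  -- counting: the (j+1) smallest pinnacle values are ≤ (e j)+1
  have hC2 : ∀ j : Fin d, 2 * j.val + 2 ≤ (e j).val := by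
    intro j
    have hmem : (e j).val + 1 ∈ S := by
      have := heS j
      rw [hS', mem_filter] at this
      exact this.2
    have hcount : j.val + 1 ≤ (S.filter (· ≤ (e j).val + 1)).card := by
      have hinj' : Function.Injective
          (fun i : Fin (j.val + 1) => (e (Fin.castLE j.isLt i)).val + 1) := by
        intro a b hab
        simp only at hab
        have h1 : (e (Fin.castLE j.isLt a)).val = (e (Fin.castLE j.isLt b)).val := by omega
        have h2 := e.injective (Fin.ext h1)
        have h3 := congrArg Fin.val h2
        simp only [Fin.coe_castLE] at h3
        exact Fin.ext h3
      have hsub : ((univ : Finset (Fin (j.val + 1))).image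
          (fun i => (e (Fin.castLE j.isLt i)).val + 1))
          ⊆ S.filter (· ≤ (e j).val + 1) := by
        intro v hv
        obtain ⟨i, _, rfl⟩ := Finset.mem_image.mp hv
        have h1 : e (Fin.castLE j.isLt i) ∈ S' := heS _
        rw [hS', mem_filter] at h1
        refine Finset.mem_filter.mpr ⟨h1.2, ?_⟩
        have hij : Fin.castLE j.isLt i ≤ j := by
          rw [Fin.le_def]
          simp only [Fin.coe_castLE]
          omega
        have h5 : e (Fin.castLE j.isLt i) ≤ e j := (e.le_iff_le).mpr hij
        have h6 := Fin.le_def.mp h5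
        omega
      have := Finset.card_le_card hsub
      rwa [Finset.card_image_of_injective _ hinj', Finset.card_univ, Fintype.card_fin] at this
    have := hc _ hmem
    omega
  -- at least j+2 complement elements below e j
  have hC5 : ∀ j : Fin d, j.val + 2 ≤ (A'.filter (fun x => x < e j)).card := by
    intro j
    have hsplit : ((univ : Finset (Fin n)).filter (fun x => x < e j)).card
        = (S'.filter (fun x => x < e j)).card + (A'.filter (fun x => x < e j)).card := by
      have hu : (S'.filter (fun x => x < e j)) ∪ (A'.filter (fun x => x < e j))
          = (univ : Finset (Fin n)).filter (fun x => x < e j) := by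
        rw [← Finset.filter_union, hA', Finset.union_compl]
      rw [← hu, Finset.card_union_of_disjoint]
      exact Finset.disjoint_filter_filter (by rw [hA']; exact disjoint_compl_right)
    have h4 := card_filter_lt_orderEmb S' hS'card j
    rw [← he] at h4
    have h3 := card_lt_fin (e j)
    have h2 := hC2 j
    omega
  -- key inequality K1
  have hK1 : ∀ (j : Fin d) (k : Fin (n - d)), k.val ≤ j.val + 1 → f k < e j := by
    intro j k hk
    by_contra hcon
    push_neg at hcon
    have hsub : (A'.filter (fun x => x < e j)) ⊆ (A'.filter (fun x => x < f k)) := by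
      intro x hx
      rw [Finset.mem_filter] at hx ⊢
      exact ⟨hx.1, lt_of_lt_of_le hx.2 hcon⟩
    have h1 := card_filter_lt_orderEmb A' hA'card k
    rw [← hf] at h1
    have h2 := hC5 j
    have := Finset.card_le_card hsub
    omega
  -- top element
  have hdlt : d - 1 < d := by omega
  have htopS' : (⟨n - 1, by omega⟩ : Fin n) ∈ S' := by
    simp only [hS', mem_filter, mem_univ, true_and]
    show n - 1 + 1 ∈ S
    rwa [Nat.sub_add_cancel (by omega)]
  have hK2 : e ⟨d - 1, hdlt⟩ = ⟨n - 1, by omega⟩ := by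
    apply le_antisymm
    · rw [Fin.le_def]
      have := (e ⟨d - 1, hdlt⟩).isLt
      simp only
      omega
    · have : (⟨n - 1, by omega⟩ : Fin n) ∈ Set.range e := by
        rw [he, Finset.range_orderEmbOfFin]
        exact_mod_cast htopS'
      obtain ⟨i, hi⟩ := this
      rw [← hi]
      apply e.monotone
      rw [Fin.le_def]
      have := i.isLt
      simp only
      omega
  have hK2' : ∀ k : Fin (n - d), f k < e ⟨d - 1, hdlt⟩ := by
    intro k
    rw [hK2]
    rw [Fin.lt_def]
    have h1 := (f k).isLt
    have h2 : f k ≠ ⟨n - 1, by omega⟩ := by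
      intro hcon
      exact hfnS k (hcon ▸ htopS')
    have : (f k).val ≠ n - 1 := fun hv => h2 (Fin.ext hv)
    simp only
    omega
  have hfne : ∀ (i : Fin d) (k : Fin (n - d)), e i ≠ f k := by
    intro i k hcon
    exact hfnS k (hcon ▸ heS i)
  obtain ⟨w, hwpin⟩ := exists_perm_pin hd hd1 e f hfne hK1 (by exact hK2')
  refine ⟨n, w, ?_⟩
  rw [hwpin]
  ext v
  simp only [Set.mem_setOf_eq, Finset.mem_coe]
  constructor
  · rintro ⟨j, rfl⟩
    have := heS j
    rw [hS', mem_filter] at this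
    exact this.2
  · intro hv
    have h3 := hpos v hv
    have hvn := hle v hv
    have hx : (⟨v - 1, by omega⟩ : Fin n) ∈ S' := by
      simp only [hS', mem_filter, mem_univ, true_and]
      show v - 1 + 1 ∈ S
      rwa [Nat.sub_add_cancel (by omega)]
    have : (⟨v - 1, by omega⟩ : Fin n) ∈ Set.range e := by
      rw [he, Finset.range_orderEmbOfFin]
      exact_mod_cast hx
    obtain ⟨j, hj⟩ := this
    refine ⟨j, ?_⟩
    have := congrArg Fin.val hj
    simp only at this
    omega


def Bf (n d : ℕ) : Finset (Finset ℕ) :=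
  ((Finset.range (n+1)).powerset).filter
    (fun S => S.card = d ∧ ∀ s ∈ S, 2 * (S.filter (· ≤ s)).card < s)

lemma mem_Bf {n d : ℕ} {S : Finset ℕ} :
    S ∈ Bf n d ↔ S ⊆ Finset.range (n+1) ∧ S.card = d ∧
      ∀ s ∈ S, 2 * (S.filter (· ≤ s)).card < s := by
  simp [Bf, Finset.mem_filter, Finset.mem_powerset, and_assoc]

lemma insert_cond {a : ℕ} {T : Finset ℕ} (hlt : ∀ t ∈ T, t < a) (ha : a ∉ T) :
    (∀ s ∈ insert a T, 2 * (((insert a T).filter (· ≤ s)).card) < s) ↔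
      ((∀ s ∈ T, 2 * ((T.filter (· ≤ s)).card) < s) ∧ 2 * (T.card + 1) < a) := by
  have hfa : (insert a T).filter (· ≤ a) = insert a T := by
    apply Finset.filter_true_of_mem
    intro x hx
    rcases Finset.mem_insert.mp hx with rfl | hx
    · exact le_refl x
    · exact (hlt x hx).le
  have hfs : ∀ s ∈ T, (insert a T).filter (· ≤ s) = T.filter (· ≤ s) := by
    intro s hs
    rw [Finset.filter_insert, if_neg (not_le.mpr (hlt s hs))]
  constructor
  · intro h
    refine ⟨fun s hs => by rw [← hfs s hs]; exact h s (Finset.mem_insert_of_mem hs), ?_⟩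
    have := h a (Finset.mem_insert_self a T)
    rwa [hfa, Finset.card_insert_of_notMem ha] at this
  · rintro ⟨h1, h2⟩ s hs
    rcases Finset.mem_insert.mp hs with rfl | hs
    · rw [hfa, Finset.card_insert_of_notMem ha]
      exact h2
    · rw [hfs s hs]
      exact h1 s hs

lemma Bf_zero (n : ℕ) : (Bf n 0).card = 1 := by
  have : Bf n 0 = {∅} := by
    ext S
    simp only [mem_Bf, Finset.mem_singleton, Finset.card_eq_zero]
    constructor
    · rintro ⟨_, rfl, _⟩; rfl
    · rintro rfl
      exact ⟨Finset.empty_subset _, rfl, by simp⟩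
  rw [this, Finset.card_singleton]

lemma Bf_eq_empty {n d : ℕ} (h : n ≤ 2 * d) (hd : 0 < d) : Bf n d = ∅ := by
  ext S
  simp only [mem_Bf, Finset.notMem_empty, iff_false, not_and]
  intro hsub hcard
  intro hcond
  have hne : S.Nonempty := by
    rw [← Finset.card_pos, hcard]; exact hd
  have hmax := S.max'_mem hne
  have h1 := hcond _ hmax
  rw [Finset.filter_true_of_mem (fun x hx => S.le_max' x hx), hcard] at h1
  have := hsub hmax
  rw [Finset.mem_range] at this
  omega

lemma Bf_one {n : ℕ} (h2 : 2 ≤ n) : (Bf n 1).card = n - 2 := by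
  have : Bf n 1 = (Finset.Icc 3 n).image (fun s => ({s} : Finset ℕ)) := by
    ext S
    simp only [mem_Bf, Finset.card_eq_one, Finset.mem_image, Finset.mem_Icc]
    constructor
    · rintro ⟨hsub, ⟨a, rfl⟩, hcond⟩
      have h1 := hcond a (Finset.mem_singleton_self a)
      rw [Finset.filter_singleton, if_pos (le_refl a), Finset.card_singleton] at h1
      have h3 := hsub (Finset.mem_singleton_self a)
      rw [Finset.mem_range] at h3
      exact ⟨a, ⟨by omega, by omega⟩, rfl⟩
    · rintro ⟨a, ⟨ha3, han⟩, rfl⟩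
      refine ⟨?_, ⟨a, rfl⟩, ?_⟩
      · intro x hx
        rw [Finset.mem_singleton] at hx
        rw [Finset.mem_range]
        omega
      · intro s hs
        rw [Finset.mem_singleton] at hs
        subst hs
        rw [Finset.filter_singleton, if_pos (le_refl s), Finset.card_singleton]
        omega
  rw [this, Finset.card_image_of_injective _ (fun a b hab => Finset.singleton_injective hab),
    Nat.card_Icc]
  omega

lemma Bf_succ_card (n d : ℕ) :
    (Bf (n+1) (d+1)).card
      = (Bf n (d+1)).card + (if 2*(d+1) < n+1 then (Bf n d).card else 0) := by
  classical
  have hsplit := Finset.card_filter_add_card_filter_not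
    (s := Bf (n+1) (d+1)) (p := fun S => (n+1) ∈ S)
  have hP1 : (Bf (n+1) (d+1)).filter (fun S => (n+1) ∉ S) = Bf n (d+1) := by
    ext S
    simp only [Finset.mem_filter, mem_Bf]
    constructor
    · rintro ⟨⟨hsub, hcard, hcond⟩, hnot⟩
      refine ⟨?_, hcard, hcond⟩
      intro x hx
      have := hsub hx
      rw [Finset.mem_range] at this ⊢
      have : x ≠ n + 1 := fun h => hnot (h ▸ hx)
      omega
    · rintro ⟨hsub, hcard, hcond⟩
      have hnot : (n+1) ∉ S := by
        intro h
        have := hsub h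
        rw [Finset.mem_range] at this
        omega
      exact ⟨⟨hsub.trans (by intro x; simp only [Finset.mem_range]; omega), hcard, hcond⟩, hnot⟩
  have hP2 : (Bf (n+1) (d+1)).filter (fun S => (n+1) ∈ S)
      = (if 2*(d+1) < n+1 then (Bf n d).image (insert (n+1)) else ∅) := by
    ext S
    simp only [Finset.mem_filter, mem_Bf]
    constructor
    · rintro ⟨⟨hsub, hcard, hcond⟩, hmem⟩
      set T := S.erase (n+1) with hT
      have hTsub : T ⊆ Finset.range (n+1) := by
        intro x hx
        rw [hT, Finset.mem_erase] at hx
        have := hsub hx.2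
        rw [Finset.mem_range] at this ⊢
        have := hx.1
        omega
      have hTna : (n+1) ∉ T := Finset.notMem_erase _ _
      have hTlt : ∀ t ∈ T, t < n+1 := by
        intro t ht
        have := hTsub ht
        rwa [Finset.mem_range] at this
      have hS : S = insert (n+1) T := by rw [hT, Finset.insert_erase hmem]
      have hTcard : T.card = d := by
        rw [hT, Finset.card_erase_of_mem hmem, hcard]
        omega
      rw [hS] at hcond
      rw [insert_cond hTlt hTna] at hcond
      rw [hTcard] at hcond
      rw [if_pos hcond.2]
      rw [Finset.mem_image]
      exact ⟨T, mem_Bf.mpr ⟨hTsub, hTcard, hcond.1⟩, hS.symm⟩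
    · intro hS
      by_cases hcase : 2*(d+1) < n+1
      · rw [if_pos hcase, Finset.mem_image] at hS
        obtain ⟨T, hT, rfl⟩ := hS
        rw [mem_Bf] at hT
        obtain ⟨hTsub, hTcard, hTcond⟩ := hT
        have hTna : (n+1) ∉ T := by
          intro h
          have := hTsub h
          rw [Finset.mem_range] at this
          omega
        have hTlt : ∀ t ∈ T, t < n+1 := by
          intro t ht
          have := hTsub ht
          rwa [Finset.mem_range] at this
        refine ⟨⟨?_, ?_, ?_⟩, Finset.mem_insert_self _ _⟩
        · intro x hx
          rcases Finset.mem_insert.mp hx with rfl | hx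
          · rw [Finset.mem_range]; omega
          · have := hTsub hx
            rw [Finset.mem_range] at this ⊢
            omega
        · rw [Finset.card_insert_of_notMem hTna, hTcard]
        · rw [insert_cond hTlt hTna]
          exact ⟨hTcond, by rw [hTcard]; exact hcase⟩
      · rw [if_neg hcase] at hS
        exact absurd hS (Finset.notMem_empty _)
  rw [hP1] at hsplit
  rw [hP2] at hsplit
  by_cases hcase : 2*(d+1) < n+1
  · rw [if_pos hcase] at hsplit
    rw [if_pos hcase]
    rw [Finset.card_image_of_injOn] at hsplit
    · omega
    · intro a ha b hb hab
      rw [Finset.mem_coe, mem_Bf] at ha hb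
      have hana : (n+1) ∉ a := by
        intro h
        have := ha.1 h
        rw [Finset.mem_range] at this
        omega
      have hbnb : (n+1) ∉ b := by
        intro h
        have := hb.1 h
        rw [Finset.mem_range] at this
        omega
      have : (insert (n+1) a).erase (n+1) = (insert (n+1) b).erase (n+1) := by rw [hab]
      rwa [Finset.erase_insert hana, Finset.erase_insert hbnb] at this
  · rw [if_neg hcase] at hsplit
    rw [if_neg hcase]
    simp only [Finset.card_empty] at hsplit
    omega

lemma choose_congr {x : ℕ} {i j : ℕ} (h : i = j) : x.choose i = x.choose j := by rw [h]

lemma pascal {a b c k : ℕ} (ha : a = c + 1) (hb : b = k + 1) :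
    Nat.choose a b = Nat.choose c k + Nat.choose c (k+1) := by
  subst ha hb
  exact Nat.choose_succ_succ _ _

lemma Bf_formula : ∀ n d : ℕ, 2*(d+2) ≤ n →
    (Bf n (d+2)).card + Nat.choose (n-2) d = Nat.choose (n-2) (d+2) := by
  intro n
  induction n with
  | zero => intro d h; omega
  | succ n ih =>
    intro d h
    rcases Nat.lt_or_ge (2*(d+2)) (n+1) with hlt | hge
    · -- 2(d+2) ≤ n
      have h2n : 2*(d+2) ≤ n := by omega
      have hrec := Bf_succ_card n (d+1)
      rw [if_pos hlt] at hrec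
      have e0 : n + 1 - 2 = (n - 2) + 1 := by omega
      rcases Nat.eq_zero_or_pos d with rfl | hd
      · -- d = 0
        have ih0 := ih 0 h2n
        have h1 := Bf_one (n := n) (by omega)
        have hp : Nat.choose (n+1-2) 2 = Nat.choose (n-2) 1 + Nat.choose (n-2) 2 := by
          have := pascal (a := n+1-2) (b := 2) (c := n-2) (k := 1) (by omega) (by omega)
          simpa using this
        have hc1 : Nat.choose (n-2) 1 = n - 2 := Nat.choose_one_right _
        have hc0 : Nat.choose (n+1-2) 0 = 1 := Nat.choose_zero_right _
        have hc0' : Nat.choose (n-2) 0 = 1 := Nat.choose_zero_right _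
        norm_num at hrec ih0 ⊢
        omega
      · -- d ≥ 1
        obtain ⟨d', rfl⟩ : ∃ d', d = d' + 1 := ⟨d - 1, by omega⟩
        have ihd := ih (d'+1) h2n
        have ihd' := ih d' (by omega)
        have hrec' : (Bf (n+1) (d'+1+2)).card
            = (Bf n (d'+1+2)).card + (Bf n (d'+2)).card := by
          have e2 : d'+1+1+1 = d'+1+2 := by omega
          have e3 : d'+1+1 = d'+2 := by omega
          rw [e2, e3] at hrec
          exact hrec
        have hp1 : Nat.choose (n+1-2) (d'+1+2) = Nat.choose (n-2) (d'+2) + Nat.choose (n-2) (d'+2+1) :=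
          pascal e0 (by omega)
        have hp2 : Nat.choose (n+1-2) (d'+1) = Nat.choose (n-2) d' + Nat.choose (n-2) (d'+1) :=
          pascal e0 rfl
        have e4 : Nat.choose (n-2) (d'+2+1) = Nat.choose (n-2) (d'+1+2) := choose_congr (by omega)
        rw [hrec', hp1, hp2, e4]
        omega
    · -- 2(d+2) = n+1
      have hempty : Bf (n+1) (d+2) = ∅ := Bf_eq_empty (by omega) (by omega)
      rw [hempty, Finset.card_empty]
      have hsymm := Nat.choose_symm (n := n+1-2) (k := d+2) (by omega)
      have e5 : n + 1 - 2 - (d + 2) = d := by omega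
      rw [e5] at hsymm
      omega

lemma Bf_sum : ∀ K n : ℕ, 1 ≤ K → 2*(K-1) ≤ n →
    (∑ d ∈ Finset.range K, (Bf n d).card) = Nat.choose (n-1) (K-1) := by
  intro K
  induction K with
  | zero => intro n h; omega
  | succ K ih =>
    intro n _ h2
    rcases Nat.eq_zero_or_pos K with rfl | hK
    · simp [Bf_zero]
    rw [Finset.sum_range_succ, ih n hK (by omega)]
    rcases Nat.lt_or_ge K 2 with hK2 | hK2
    · -- K = 1
      obtain rfl : K = 1 := by omega
      have h1 := Bf_one (n := n) (by omega)
      have hc : Nat.choose (n-1) 1 = n - 1 := Nat.choose_one_right _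
      have hc0 : Nat.choose (n-1) 0 = 1 := Nat.choose_zero_right _
      have e : (1:ℕ) + 1 - 1 = 1 := rfl
      rw [e]
      rw [show (1:ℕ) - 1 = 0 from rfl]
      omega
    · obtain ⟨k, rfl⟩ : ∃ k, K = k + 2 := ⟨K - 2, by omega⟩
      have hform := Bf_formula n k (by omega)
      have hp1 : Nat.choose (n-1) (k+2) = Nat.choose (n-2) (k+1) + Nat.choose (n-2) (k+1+1) :=
        pascal (by omega) (by omega)
      have hp2 : Nat.choose (n-1) (k+1) = Nat.choose (n-2) k + Nat.choose (n-2) (k+1) :=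
        pascal (by omega) rfl
      have e1 : k + 2 - 1 = k + 1 := by omega
      have e2 : k + 2 + 1 - 1 = k + 2 := by omega
      have e3 : Nat.choose (n-2) (k+1+1) = Nat.choose (n-2) (k+2) := choose_congr (by omega)
      rw [e1, e2, hp1, hp2, e3]
      omega

def Af (m : ℕ) : Finset (Finset ℕ) :=
  ((Finset.range (m+1)).powerset).filter
    (fun S => m ∈ S ∧ ∀ s ∈ S, 2 * (S.filter (· ≤ s)).card < s)

lemma mem_Af {m : ℕ} {S : Finset ℕ} :
    S ∈ Af m ↔ S ⊆ Finset.range (m+1) ∧ m ∈ S ∧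
      ∀ s ∈ S, 2 * (S.filter (· ≤ s)).card < s := by
  simp [Af, Finset.mem_filter, Finset.mem_powerset, and_assoc]

lemma Af_card {m : ℕ} (hm : 3 ≤ m) :
    (Af m).card = ∑ d ∈ Finset.range ((m-1)/2), (Bf (m-1) d).card := by
  classical
  set D : Finset (Finset ℕ) := ((Finset.range m).powerset).filter
    (fun T => (∀ s ∈ T, 2 * (T.filter (· ≤ s)).card < s) ∧ 2*(T.card+1) < m) with hD
  have hmemD : ∀ T : Finset ℕ, T ∈ D ↔ T ⊆ Finset.range m ∧
      (∀ s ∈ T, 2 * (T.filter (· ≤ s)).card < s) ∧ 2*(T.card+1) < m := by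
    intro T
    simp [hD, Finset.mem_filter, Finset.mem_powerset]
  have hcd : (Af m).card = D.card := by
    refine Finset.card_bij' (fun S _ => S.erase m) (fun T _ => insert m T) ?_ ?_ ?_ ?_
    · -- maps into D
      intro S hS
      rw [mem_Af] at hS
      obtain ⟨hsub, hmem, hcond⟩ := hS
      have hTsub : S.erase m ⊆ Finset.range m := by
        intro x hx
        rw [Finset.mem_erase] at hx
        have := hsub hx.2
        rw [Finset.mem_range] at this ⊢
        have := hx.1
        omega
      have hTlt : ∀ t ∈ S.erase m, t < m := by
        intro t ht
        have := hTsub ht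
        rwa [Finset.mem_range] at this
      have hTna : m ∉ S.erase m := Finset.notMem_erase _ _
      have hS' : S = insert m (S.erase m) := (Finset.insert_erase hmem).symm
      rw [hS', insert_cond hTlt hTna] at hcond
      rw [hmemD]
      exact ⟨hTsub, hcond.1, hcond.2⟩
    · -- maps back into Af
      intro T hT
      rw [hmemD] at hT
      obtain ⟨hsub, hcond, hlt⟩ := hT
      have hTna : m ∉ T := by
        intro h
        have := hsub h
        rw [Finset.mem_range] at this
        omega
      have hTlt : ∀ t ∈ T, t < m := by
        intro t ht
        have := hsub ht
        rwa [Finset.mem_range] at this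
      rw [mem_Af]
      refine ⟨?_, Finset.mem_insert_self _ _, ?_⟩
      · intro x hx
        rcases Finset.mem_insert.mp hx with rfl | hx
        · rw [Finset.mem_range]; omega
        · have := hsub hx
          rw [Finset.mem_range] at this ⊢
          omega
      · rw [insert_cond hTlt hTna]
        exact ⟨hcond, hlt⟩
    · intro S hS
      rw [mem_Af] at hS
      exact Finset.insert_erase hS.2.1
    · intro T hT
      rw [hmemD] at hT
      apply Finset.erase_insert
      intro h
      have := hT.1 h
      rw [Finset.mem_range] at this
      omega
  rw [hcd]
  rw [Finset.card_eq_sum_card_fiberwise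
    (f := fun T => T.card) (t := Finset.range ((m-1)/2)) ?hmem]
  · apply Finset.sum_congr rfl
    intro d hd
    rw [Finset.mem_range] at hd
    congr 1
    ext T
    rw [Finset.mem_filter, hmemD, mem_Bf]
    constructor
    · rintro ⟨⟨hsub, hcond, hlt⟩, hcard⟩
      refine ⟨?_, hcard, hcond⟩
      rwa [show m - 1 + 1 = m by omega]
    · rintro ⟨hsub, hcard, hcond⟩
      rw [show m - 1 + 1 = m by omega] at hsub
      exact ⟨⟨hsub, hcond, by rw [hcard]; omega⟩, hcard⟩
  case hmem =>
    intro T hT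
    rw [Finset.mem_coe, hmemD] at hT
    rw [Finset.mem_coe, Finset.mem_range]
    show T.card < (m-1)/2
    omega

theorem count_admissible_with_max (m : ℕ) (hm : 3 ≤ m) :
    Nat.card {S : Finset ℕ // Admissible S ∧ ∃ h : S.Nonempty, S.max' h = m} =
      Nat.choose (m - 2) (m / 2) := by
  classical
  have hchar : ∀ S : Finset ℕ,
      ((Admissible S ∧ ∃ h : S.Nonempty, S.max' h = m) ↔ S ∈ Af m) := by
    intro S
    constructor
    · rintro ⟨⟨n, w, hw⟩, hne, hmax⟩
      have hcond := pin_cond w S hw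
      rw [mem_Af]
      refine ⟨?_, ?_, hcond⟩
      · intro x hx
        rw [Finset.mem_range]
        have := S.le_max' x hx
        omega
      · rw [← hmax]
        exact S.max'_mem hne
    · intro hS
      rw [mem_Af] at hS
      obtain ⟨hsub, hmem, hcond⟩ := hS
      have hne : S.Nonempty := ⟨m, hmem⟩
      refine ⟨cond_admissible S hcond, hne, ?_⟩
      apply le_antisymm
      · apply Finset.max'_le
        intro y hy
        have := hsub hy
        rw [Finset.mem_range] at this
        omega
      · exact S.le_max' m hmem
  have hset : {S : Finset ℕ | Admissible S ∧ ∃ h : S.Nonempty, S.max' h = m}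
      = ↑(Af m) := by
    ext S
    simpa using hchar S
  have h1 : Nat.card {S : Finset ℕ // Admissible S ∧ ∃ h : S.Nonempty, S.max' h = m}
      = (Af m).card := by
    calc Nat.card {S : Finset ℕ // Admissible S ∧ ∃ h : S.Nonempty, S.max' h = m}
        = Nat.card {S : Finset ℕ | Admissible S ∧ ∃ h : S.Nonempty, S.max' h = m} := rfl
      _ = (↑(Af m) : Set (Finset ℕ)).ncard := by rw [hset, Nat.card_coe_set_eq]
      _ = (Af m).card := Set.ncard_coe_finset _
  rw [h1, Af_card hm, Bf_sum ((m-1)/2) (m-1) (by omega) (by omega)]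
  have e1 : m - 1 - 1 = m - 2 := by omega
  rw [e1]
  have hk : m / 2 ≤ m - 2 := by omega
  have hsymm := Nat.choose_symm hk
  rw [← hsymm]
  exact choose_congr (by omega)
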